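/- arXiv:2504.02201 — 2 statements merged into one kernel-verified Lean document; each statement's English description precedes it below -/
import Mathlib

section
/- Weak duality for the LQR SDP pair: let A be n×n, B be n×m, Q symmetric n×n, R symmetric m×m, and x_0 ∈ ℝⁿ. Suppose Z is a symmetric positive semidefinite (n+m)×(n+m) matrix with blocks Z₁₁ (n×n), Z₁₂ (n×m), Z₂₂ (m×m) satisfying x_0x_0ᵀ + AZ₁₁ + BZ₁₂ᵀ + Z₁₁Aᵀ + Z₁₂Bᵀ = 0, and P is a symmetric n×n matrix such that the block matrix [AᵀP + PA + Q, PB; BᵀP, R] is positive semidefinite. Then Tr(Q Z₁₁) + Tr(R Z₂₂) ≥ x_0ᵀP x_0. -/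
open Matrix

lemma psd_trace_nonneg {k : Type*} [Fintype k] [DecidableEq k] {M : Matrix k k ℝ}
    (hM : M.PosSemidef) : 0 ≤ M.trace := by
  rw [Matrix.trace]
  apply Finset.sum_nonneg
  intro i _
  have := hM.dotProduct_mulVec_nonneg (Pi.single i 1)
  simpa [dotProduct, Matrix.mulVec, Pi.single_apply, Finset.mul_sum] using this

lemma psd_trace_mul_nonneg {k : Type*} [Fintype k] [DecidableEq k]
    {M N : Matrix k k ℝ} (hM : M.PosSemidef) (hN : N.PosSemidef) :
    0 ≤ (M * N).trace := by
  obtain ⟨C, rfl⟩ : ∃ C : Matrix k k ℝ, N = Cᴴ * C := by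
    open scoped MatrixOrder in
    refine ⟨CFC.sqrt N, ?_⟩
    have h0 : 0 ≤ N := Matrix.nonneg_iff_posSemidef.mpr hN
    have hs : (CFC.sqrt N).PosSemidef := Matrix.nonneg_iff_posSemidef.mp (CFC.sqrt_nonneg N)
    rw [hs.1.eq, CFC.sqrt_mul_sqrt_self N h0]
  have h1 : (M * (Cᴴ * C)).trace = (C * M * Cᴴ).trace := by
    rw [← Matrix.mul_assoc, Matrix.trace_mul_comm, Matrix.mul_assoc]
  rw [h1]
  exact psd_trace_nonneg (hM.mul_mul_conjTranspose_same C)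

lemma trace_fromBlocks {k l : Type*} [Fintype k] [Fintype l]
    (A : Matrix k k ℝ) (B : Matrix k l ℝ) (C : Matrix l k ℝ) (D : Matrix l l ℝ) :
    (fromBlocks A B C D).trace = A.trace + D.trace := by
  simp [Matrix.trace, Fintype.sum_sum_type, Matrix.fromBlocks]

/-- Weak duality for the LQR SDP pair. -/
theorem lqr_weak_duality {n m : ℕ}
    (A : Matrix (Fin n) (Fin n) ℝ) (B : Matrix (Fin n) (Fin m) ℝ)
    (Q : Matrix (Fin n) (Fin n) ℝ) (hQ : Q.IsSymm)
    (R : Matrix (Fin m) (Fin m) ℝ) (hRsymm : R.IsSymm)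
    (x0 : Fin n → ℝ)
    (Z₁₁ : Matrix (Fin n) (Fin n) ℝ) (Z₁₂ : Matrix (Fin n) (Fin m) ℝ)
    (Z₂₂ : Matrix (Fin m) (Fin m) ℝ)
    (hZ : (fromBlocks Z₁₁ Z₁₂ Z₁₂ᵀ Z₂₂).PosSemidef)
    (hZfeas : vecMulVec x0 x0 + A * Z₁₁ + B * Z₁₂ᵀ + Z₁₁ * Aᵀ + Z₁₂ * Bᵀ = 0)
    (P : Matrix (Fin n) (Fin n) ℝ) (hP : P.IsSymm)
    (hPfeas : (fromBlocks (Aᵀ * P + P * A + Q) (P * B) (Bᵀ * P) R).PosSemidef) :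
    x0 ⬝ᵥ P *ᵥ x0 ≤ (Q * Z₁₁).trace + (R * Z₂₂).trace := by
  have key : 0 ≤ ((fromBlocks (Aᵀ * P + P * A + Q) (P * B) (Bᵀ * P) R) *
      (fromBlocks Z₁₁ Z₁₂ Z₁₂ᵀ Z₂₂)).trace := psd_trace_mul_nonneg hPfeas hZ
  rw [Matrix.fromBlocks_multiply, trace_fromBlocks] at key
  -- trace of P against the feasibility equation
  have hfe : (P * (vecMulVec x0 x0 + A * Z₁₁ + B * Z₁₂ᵀ + Z₁₁ * Aᵀ + Z₁₂ * Bᵀ)).trace = 0 := by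
    rw [hZfeas, Matrix.mul_zero, Matrix.trace_zero]
  have hx : (P * vecMulVec x0 x0).trace = x0 ⬝ᵥ P *ᵥ x0 := by
    simp [Matrix.trace, Matrix.mul_apply, Matrix.vecMulVec_apply, dotProduct,
      Matrix.mulVec, Finset.mul_sum, mul_comm, mul_left_comm]
  have h1 : (Aᵀ * P * Z₁₁).trace = (P * (Z₁₁ * Aᵀ)).trace := by
    rw [Matrix.trace_mul_comm (Aᵀ * P) Z₁₁, ← Matrix.mul_assoc,
      Matrix.trace_mul_comm (Z₁₁ * Aᵀ) P]
  have h2 : (P * A * Z₁₁).trace = (P * (A * Z₁₁)).trace := by rw [Matrix.mul_assoc]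
  have h3 : (P * B * Z₁₂ᵀ).trace = (P * (B * Z₁₂ᵀ)).trace := by rw [Matrix.mul_assoc]
  have h4 : (Bᵀ * P * Z₁₂).trace = (P * (Z₁₂ * Bᵀ)).trace := by
    rw [Matrix.trace_mul_comm (Bᵀ * P) Z₁₂, ← Matrix.mul_assoc,
      Matrix.trace_mul_comm (Z₁₂ * Bᵀ) P]
  simp only [Matrix.mul_add, Matrix.trace_add] at hfe
  simp only [Matrix.add_mul, Matrix.trace_add] at key
  rw [hx] at hfe
  rw [h1, h2, h3, h4] at key
  linarith
end

section
/- Closed-loop 𝓗∞ energy identity: let A, B, B_w, Q, R, γ be as in the game Riccati setup with R positive definite and γ > 0, let P* be a symmetric n×n matrix with 𝓡(P*) = 0, and set K* = −R⁻¹BᵀP*, L* = γ⁻²B_wᵀP*, Q* = Q + (K*)ᵀRK*. Let x : [0,∞) → ℝⁿ be differentiable with x'(t) = (A+BK*) x(t) + B_w w(t) for all t ≥ 0, x(0) = 0, and x(t) → 0 as t → ∞, where w : [0,∞) → ℝ^p is measurable with t ↦ ‖x(t)‖² and t ↦ ‖w(t)‖² integrable on (0,∞). Then ∫₀^∞ (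 x(t)ᵀQ*x(t) − γ²‖w(t)‖² ) dt = −γ² ∫₀^∞ ‖w(t) − L*x(t)‖² dt. -/
open Matrix MeasureTheory Filter

lemma dotSelf_nonneg {k : ℕ} (v : Fin k → ℝ) : 0 ≤ v ⬝ᵥ v :=
  Finset.sum_nonneg fun _ _ => mul_self_nonneg _

lemma abs_dot_le {k : ℕ} (a b : Fin k → ℝ) : |a ⬝ᵥ b| ≤ (a ⬝ᵥ a + b ⬝ᵥ b) / 2 := by
  have h1 : (0:ℝ) ≤ (a - b) ⬝ᵥ (a - b) := dotSelf_nonneg _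
  have h2 : (0:ℝ) ≤ (a + b) ⬝ᵥ (a + b) := dotSelf_nonneg _
  have e1 : (a - b) ⬝ᵥ (a - b) = a ⬝ᵥ a - 2 * (a ⬝ᵥ b) + b ⬝ᵥ b := by
    rw [sub_dotProduct, dotProduct_sub, dotProduct_sub, dotProduct_comm b a]; ring
  have e2 : (a + b) ⬝ᵥ (a + b) = a ⬝ᵥ a + 2 * (a ⬝ᵥ b) + b ⬝ᵥ b := by
    rw [add_dotProduct, dotProduct_add, dotProduct_add, dotProduct_comm b a]; ring
  rw [e1] at h1; rw [e2] at h2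
  rw [abs_le]; constructor <;> linarith

lemma mulVec_dot_self_le {k l : ℕ} (M : Matrix (Fin k) (Fin l) ℝ) (v : Fin l → ℝ) :
    (M *ᵥ v) ⬝ᵥ (M *ᵥ v) ≤ (∑ i, ∑ j, (M i j) ^ 2) * (v ⬝ᵥ v) := by
  simp only [dotProduct, mulVec]
  rw [Finset.sum_mul]
  apply Finset.sum_le_sum
  intro i _
  calc (∑ j, M i j * v j) * (∑ j, M i j * v j) = (∑ j, M i j * v j) ^ 2 := (sq _).symm
    _ ≤ (∑ j, (M i j) ^ 2) * (∑ j, (v j) ^ 2) :=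
        Finset.sum_mul_sq_le_sq_mul_sq Finset.univ _ _
    _ = (∑ j, (M i j) ^ 2) * (∑ j, v j * v j) := by simp [sq]

lemma tdot {k l : ℕ} (M : Matrix (Fin k) (Fin l) ℝ) (a : Fin l → ℝ) (b : Fin k → ℝ) :
    (M *ᵥ a) ⬝ᵥ b = a ⬝ᵥ (Mᵀ *ᵥ b) := by
  rw [dotProduct_mulVec, vecMul_transpose]

lemma cont_quad {l : ℕ} (N : Matrix (Fin l) (Fin l) ℝ) :
    Continuous fun v : Fin l → ℝ => v ⬝ᵥ (N *ᵥ v) := by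
  simp only [dotProduct, mulVec]
  exact continuous_finset_sum _ fun i _ => (continuous_apply i).mul
    (continuous_finset_sum _ fun j _ => (continuous_const.mul (continuous_apply j)))

lemma aesm_dot {k l : ℕ} {μ : Measure ℝ} (M : Matrix (Fin k) (Fin l) ℝ)
    {f : ℝ → Fin k → ℝ} {g : ℝ → Fin l → ℝ}
    (hf : AEStronglyMeasurable f μ) (hg : AEStronglyMeasurable g μ) :
    AEStronglyMeasurable (fun t => f t ⬝ᵥ (M *ᵥ g t)) μ := by
  simp only [dotProduct, mulVec]
  exact Finset.aestronglyMeasurable_fun_sum _ fun i _ =>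
    ((continuous_apply i).comp_aestronglyMeasurable hf).mul
      (Finset.aestronglyMeasurable_fun_sum _ fun j _ =>
        ((continuous_apply j).comp_aestronglyMeasurable hg).const_mul _)

/-- Closed-loop 𝓗∞ energy identity. -/
theorem hinf_closed_loop_energy_identity {n m p : ℕ}
    (A : Matrix (Fin n) (Fin n) ℝ) (B : Matrix (Fin n) (Fin m) ℝ)
    (Bw : Matrix (Fin n) (Fin p) ℝ)
    (Q : Matrix (Fin n) (Fin n) ℝ) (hQ : Q.IsSymm)
    (R : Matrix (Fin m) (Fin m) ℝ) (hR : R.PosDef) (hRsymm : R.IsSymm)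
    (γ : ℝ) (hγ : 0 < γ)
    (Ps : Matrix (Fin n) (Fin n) ℝ) (hPs : Ps.IsSymm)
    (hARE : Aᵀ * Ps + Ps * A + Q - Ps * B * R⁻¹ * Bᵀ * Ps
      + (γ ^ 2)⁻¹ • (Ps * Bw * Bwᵀ * Ps) = 0)
    (x : ℝ → Fin n → ℝ) (w : ℝ → Fin p → ℝ)
    (hw : Measurable w)
    (hderiv : ∀ t : ℝ, 0 ≤ t →
      HasDerivAt x ((A + B * (-(R⁻¹ * Bᵀ * Ps))) *ᵥ x t + Bw *ᵥ w t) t)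
    (hx0 : x 0 = 0)
    (hlim : Tendsto x atTop (nhds 0))
    (hint_x : IntegrableOn (fun t => x t ⬝ᵥ x t) (Set.Ioi (0 : ℝ)))
    (hint_w : IntegrableOn (fun t => w t ⬝ᵥ w t) (Set.Ioi (0 : ℝ))) :
    (let Ks := -(R⁻¹ * Bᵀ * Ps)
     let Ls := (γ ^ 2)⁻¹ • (Bwᵀ * Ps)
     let Qs := Q + Ksᵀ * R * Ks
     (∫ t in Set.Ioi (0 : ℝ), (x t ⬝ᵥ Qs *ᵥ x t - γ ^ 2 * (w t ⬝ᵥ w t)))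
       = -(γ ^ 2) *
         ∫ t in Set.Ioi (0 : ℝ), (w t - Ls *ᵥ x t) ⬝ᵥ (w t - Ls *ᵥ x t)) := by
  show (∫ t in Set.Ioi (0 : ℝ),
        (x t ⬝ᵥ (Q + (-(R⁻¹ * Bᵀ * Ps))ᵀ * R * -(R⁻¹ * Bᵀ * Ps)) *ᵥ x t
          - γ ^ 2 * (w t ⬝ᵥ w t)))
      = -(γ ^ 2) * ∫ t in Set.Ioi (0 : ℝ),
          (w t - ((γ ^ 2)⁻¹ • (Bwᵀ * Ps)) *ᵥ x t) ⬝ᵥ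
            (w t - ((γ ^ 2)⁻¹ • (Bwᵀ * Ps)) *ᵥ x t)
  set Ks : Matrix (Fin m) (Fin n) ℝ := -(R⁻¹ * Bᵀ * Ps) with hKs
  set Ls : Matrix (Fin p) (Fin n) ℝ := (γ ^ 2)⁻¹ • (Bwᵀ * Ps) with hLs
  set Qs : Matrix (Fin n) (Fin n) ℝ := Q + Ksᵀ * R * Ks with hQs
  set Acl : Matrix (Fin n) (Fin n) ℝ := A + B * Ks with hAcl
  have hγ2 : (γ:ℝ) ^ 2 ≠ 0 := by positivity
  have hRdet : IsUnit R.det := hR.det_pos.ne'.isUnit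
  have hRinv : R⁻¹ᵀ = R⁻¹ := by rw [Matrix.transpose_nonsing_inv, hRsymm.eq]
  have hKsT : Ksᵀ = -(Ps * B * R⁻¹) := by
    rw [hKs]; simp [Matrix.transpose_mul, hRinv, hPs.eq, Matrix.mul_assoc]
  -- key Riccati identity for the closed loop
  have hKey : (Aclᵀ * Ps + Ps * Acl) + (Qs + (γ ^ 2) • (Lsᵀ * Ls)) = 0 := by
    have hKRK : Ksᵀ * R * Ks = Ps * B * R⁻¹ * Bᵀ * Ps := by
      rw [hKsT, hKs]
      simp only [Matrix.neg_mul, Matrix.mul_neg, neg_neg, Matrix.mul_assoc]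
      rw [← Matrix.mul_assoc R R⁻¹, Matrix.mul_nonsing_inv _ hRdet, Matrix.one_mul]
    have hLL : (γ ^ 2) • (Lsᵀ * Ls) = (γ ^ 2)⁻¹ • (Ps * Bw * Bwᵀ * Ps) := by
      rw [hLs, Matrix.transpose_smul, Matrix.transpose_mul, hPs.eq,
        Matrix.transpose_transpose, Matrix.smul_mul, Matrix.mul_smul,
        smul_smul, smul_smul]
      congr 1
      · field_simp
      · exact (Matrix.mul_assoc _ _ _).symm
    rw [hQs, hKRK, hLL, hAcl, hKs]
    have hARE' := hARE
    generalize hX : (γ ^ 2)⁻¹ • (Ps * Bw * Bwᵀ * Ps) = X at hARE' ⊢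
    rw [Matrix.transpose_add, Matrix.transpose_mul, hKsT, ← hARE']
    simp only [Matrix.mul_add, Matrix.add_mul, Matrix.neg_mul, Matrix.mul_neg,
      Matrix.mul_assoc, sub_eq_add_neg]
    abel
  have hneg : Aclᵀ * Ps + Ps * Acl = -(Qs + (γ ^ 2) • (Lsᵀ * Ls)) :=
    eq_neg_of_add_eq_zero_left hKey
  have hBL : Bwᵀ * Ps = (γ ^ 2) • Ls := by
    rw [hLs, smul_smul, mul_inv_cancel₀ hγ2, one_smul]
  have hLL2 : ∀ v : Fin n → ℝ, (Ls *ᵥ v) ⬝ᵥ (Ls *ᵥ v) = v ⬝ᵥ ((Lsᵀ * Ls) *ᵥ v) := by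
    intro v
    rw [tdot, mulVec_mulVec]
  -- pointwise algebra
  have halg : ∀ (v : Fin n → ℝ) (z : Fin p → ℝ),
      (Acl *ᵥ v + Bw *ᵥ z) ⬝ᵥ (Ps *ᵥ v) + v ⬝ᵥ (Ps *ᵥ (Acl *ᵥ v + Bw *ᵥ z))
      = -(v ⬝ᵥ (Qs *ᵥ v)) + 2 * γ ^ 2 * (z ⬝ᵥ (Ls *ᵥ v))
        - γ ^ 2 * ((Ls *ᵥ v) ⬝ᵥ (Ls *ᵥ v)) := by
    intro v z
    have e1 : (Acl *ᵥ v) ⬝ᵥ (Ps *ᵥ v) = v ⬝ᵥ ((Aclᵀ * Ps) *ᵥ v) := by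
      rw [tdot, mulVec_mulVec]
    have e2 : v ⬝ᵥ (Ps *ᵥ (Acl *ᵥ v)) = v ⬝ᵥ ((Ps * Acl) *ᵥ v) := by
      rw [mulVec_mulVec]
    have e3 : (Bw *ᵥ z) ⬝ᵥ (Ps *ᵥ v) = γ ^ 2 * (z ⬝ᵥ (Ls *ᵥ v)) := by
      rw [tdot, mulVec_mulVec, hBL, smul_mulVec, dotProduct_smul, smul_eq_mul]
    have e4 : v ⬝ᵥ (Ps *ᵥ (Bw *ᵥ z)) = γ ^ 2 * (z ⬝ᵥ (Ls *ᵥ v)) := by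
      have h := tdot Ps v (Bw *ᵥ z)
      rw [hPs.eq] at h
      rw [← h, dotProduct_comm]
      exact e3
    have e5 : v ⬝ᵥ ((Aclᵀ * Ps) *ᵥ v) + v ⬝ᵥ ((Ps * Acl) *ᵥ v)
        = -(v ⬝ᵥ (Qs *ᵥ v)) - γ ^ 2 * ((Ls *ᵥ v) ⬝ᵥ (Ls *ᵥ v)) := by
      rw [← dotProduct_add, ← Matrix.add_mulVec, hneg, Matrix.neg_mulVec,
        dotProduct_neg, Matrix.add_mulVec, dotProduct_add,
        smul_mulVec, dotProduct_smul, smul_eq_mul, hLL2]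
      ring
    rw [add_dotProduct, mulVec_add, dotProduct_add, e1, e2, e3, e4]
    linarith [e5]
  -- measurability
  have hxc : ContinuousOn x (Set.Ioi (0:ℝ)) := fun t ht =>
    ((hderiv t ht.le).continuousAt).continuousWithinAt
  have hxae : AEStronglyMeasurable x (volume.restrict (Set.Ioi (0:ℝ))) :=
    hxc.aestronglyMeasurable measurableSet_Ioi
  have hwae : AEStronglyMeasurable w (volume.restrict (Set.Ioi (0:ℝ))) :=
    hw.aestronglyMeasurable
  -- quadratic bounds
  obtain ⟨Cq, hCq0, hCq⟩ : ∃ C : ℝ, 0 ≤ C ∧ ∀ v : Fin n → ℝ,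
      (Qs *ᵥ v) ⬝ᵥ (Qs *ᵥ v) ≤ C * (v ⬝ᵥ v) :=
    ⟨∑ i, ∑ j, (Qs i j) ^ 2, by positivity, fun v => mulVec_dot_self_le Qs v⟩
  obtain ⟨Cl, hCl0, hCl⟩ : ∃ C : ℝ, 0 ≤ C ∧ ∀ v : Fin n → ℝ,
      (Ls *ᵥ v) ⬝ᵥ (Ls *ᵥ v) ≤ C * (v ⬝ᵥ v) :=
    ⟨∑ i, ∑ j, (Ls i j) ^ 2, by positivity, fun v => mulVec_dot_self_le Ls v⟩
  -- integrability
  have I1 : IntegrableOn (fun t => x t ⬝ᵥ (Qs *ᵥ x t)) (Set.Ioi (0:ℝ)) := by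
    apply Integrable.mono (hint_x.const_mul ((1 + Cq) / 2)) (aesm_dot Qs hxae hxae)
    filter_upwards with t
    simp only [Real.norm_eq_abs]
    have h1 := abs_dot_le (x t) (Qs *ᵥ x t)
    have h2 := hCq (x t)
    have h3 := dotSelf_nonneg (x t)
    have h4 : |x t ⬝ᵥ (Qs *ᵥ x t)| ≤ (1 + Cq) / 2 * (x t ⬝ᵥ x t) := by nlinarith
    exact h4.trans (le_abs_self _)
  have I3 : IntegrableOn (fun t => (Ls *ᵥ x t) ⬝ᵥ (Ls *ᵥ x t)) (Set.Ioi (0:ℝ)) := by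
    apply Integrable.mono (hint_x.const_mul Cl)
    · simp only [hLL2]
      exact aesm_dot (Lsᵀ * Ls) hxae hxae
    filter_upwards with t
    simp only [Real.norm_eq_abs]
    have h2 := hCl (x t)
    have h3 := dotSelf_nonneg (Ls *ᵥ x t)
    have h4 : |(Ls *ᵥ x t) ⬝ᵥ (Ls *ᵥ x t)| ≤ Cl * (x t ⬝ᵥ x t) := by
      rw [abs_of_nonneg h3]; exact h2
    exact h4.trans (le_abs_self _)
  have I2 : IntegrableOn (fun t => w t ⬝ᵥ (Ls *ᵥ x t)) (Set.Ioi (0:ℝ)) := by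
    apply Integrable.mono ((hint_w.const_mul (1/2)).add (hint_x.const_mul (Cl/2)))
      (aesm_dot Ls hwae hxae)
    filter_upwards with t
    simp only [Real.norm_eq_abs]
    have h1 := abs_dot_le (w t) (Ls *ᵥ x t)
    have h2 := hCl (x t)
    have h3 := dotSelf_nonneg (w t)
    have h5 := dotSelf_nonneg (x t)
    have h4 : |w t ⬝ᵥ (Ls *ᵥ x t)| ≤ 1/2 * (w t ⬝ᵥ w t) + Cl/2 * (x t ⬝ᵥ x t) := by
      nlinarith
    exact h4.trans (le_abs_self _)
  have hg_int : IntegrableOn (fun t => -(x t ⬝ᵥ (Qs *ᵥ x t))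
      + 2 * γ ^ 2 * (w t ⬝ᵥ (Ls *ᵥ x t))
      - γ ^ 2 * ((Ls *ᵥ x t) ⬝ᵥ (Ls *ᵥ x t))) (Set.Ioi (0:ℝ)) :=
    (I1.neg.add (I2.const_mul (2 * γ ^ 2))).sub (I3.const_mul (γ ^ 2))
  -- the Lyapunov function and its derivative
  set V : ℝ → ℝ := fun t => x t ⬝ᵥ (Ps *ᵥ x t) with hV
  have hVd : ∀ t : ℝ, 0 ≤ t → HasDerivAt V
      (-(x t ⬝ᵥ (Qs *ᵥ x t)) + 2 * γ ^ 2 * (w t ⬝ᵥ (Ls *ᵥ x t))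
        - γ ^ 2 * ((Ls *ᵥ x t) ⬝ᵥ (Ls *ᵥ x t))) t := by
    intro t ht
    have hu := hderiv t ht
    set u : Fin n → ℝ := Acl *ᵥ x t + Bw *ᵥ w t with hu_def
    have hc : ∀ i, HasDerivAt (fun s => x s i) (u i) t := fun i =>
      hasDerivAt_pi.1 hu i
    have hsum : HasDerivAt (fun s => ∑ i, x s i * ∑ j, Ps i j * x s j)
        (∑ i, (u i * (∑ j, Ps i j * x t j) + x t i * (∑ j, Ps i j * u j))) t := by
      apply HasDerivAt.fun_sum
      intro i _
      exact (hc i).mul (HasDerivAt.fun_sum fun j _ => (hc j).const_mul (Ps i j))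
    have hVfun : (fun s => ∑ i, x s i * ∑ j, Ps i j * x s j) = V := by
      funext s; simp [hV, dotProduct, mulVec]
    rw [hVfun] at hsum
    have hval : (∑ i, (u i * (∑ j, Ps i j * x t j) + x t i * (∑ j, Ps i j * u j)))
        = u ⬝ᵥ (Ps *ᵥ x t) + x t ⬝ᵥ (Ps *ᵥ u) := by
      simp [dotProduct, mulVec, Finset.sum_add_distrib]
    rw [hval] at hsum
    have := halg (x t) (w t)
    rw [hu_def] at hsum
    rw [this] at hsum
    exact hsum
  -- integral of the derivative vanishes
  have hVc : ContinuousWithinAt V (Set.Ici (0:ℝ)) 0 :=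
    (((cont_quad Ps).continuousAt).comp ((hderiv 0 le_rfl).continuousAt)).continuousWithinAt
  have hVtend : Tendsto V atTop (nhds 0) := by
    have h := ((cont_quad Ps).tendsto 0).comp hlim
    rw [hV]; simpa [Function.comp_def] using h
  have hVzero : (∫ t in Set.Ioi (0:ℝ), (-(x t ⬝ᵥ (Qs *ᵥ x t))
      + 2 * γ ^ 2 * (w t ⬝ᵥ (Ls *ᵥ x t))
      - γ ^ 2 * ((Ls *ᵥ x t) ⬝ᵥ (Ls *ᵥ x t)))) = 0 := by
    have h := integral_Ioi_of_hasDerivAt_of_tendsto hVc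
      (fun t ht => hVd t (le_of_lt ht)) hg_int hVtend
    rw [h, hV]
    simp [hx0]
  -- pointwise identity between the two integrands
  have hF2 : ∀ t, (w t - Ls *ᵥ x t) ⬝ᵥ (w t - Ls *ᵥ x t)
      = w t ⬝ᵥ w t - 2 * (w t ⬝ᵥ (Ls *ᵥ x t)) + (Ls *ᵥ x t) ⬝ᵥ (Ls *ᵥ x t) := by
    intro t
    rw [sub_dotProduct, dotProduct_sub, dotProduct_sub,
      dotProduct_comm (Ls *ᵥ x t) (w t)]
    ring
  have hF2int : IntegrableOn (fun t => (w t - Ls *ᵥ x t) ⬝ᵥ (w t - Ls *ᵥ x t))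
      (Set.Ioi (0:ℝ)) := by
    have h := (hint_w.sub (I2.const_mul 2)).add I3
    exact h.congr (Eventually.of_forall fun t => (hF2 t).symm)
  have hpt : ∀ t, (x t ⬝ᵥ Qs *ᵥ x t - γ ^ 2 * (w t ⬝ᵥ w t))
      = -((-(x t ⬝ᵥ (Qs *ᵥ x t)) + 2 * γ ^ 2 * (w t ⬝ᵥ (Ls *ᵥ x t))
          - γ ^ 2 * ((Ls *ᵥ x t) ⬝ᵥ (Ls *ᵥ x t))))
        - γ ^ 2 * ((w t - Ls *ᵥ x t) ⬝ᵥ (w t - Ls *ᵥ x t)) := by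
    intro t
    rw [hF2 t]
    ring
  calc (∫ t in Set.Ioi (0:ℝ), (x t ⬝ᵥ Qs *ᵥ x t - γ ^ 2 * (w t ⬝ᵥ w t)))
      = ∫ t in Set.Ioi (0:ℝ), (-((-(x t ⬝ᵥ (Qs *ᵥ x t))
          + 2 * γ ^ 2 * (w t ⬝ᵥ (Ls *ᵥ x t))
          - γ ^ 2 * ((Ls *ᵥ x t) ⬝ᵥ (Ls *ᵥ x t))))
        - γ ^ 2 * ((w t - Ls *ᵥ x t) ⬝ᵥ (w t - Ls *ᵥ x t))) := by
        exact integral_congr_ae (Eventually.of_forall fun t => hpt t)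
    _ = (∫ t in Set.Ioi (0:ℝ), -((-(x t ⬝ᵥ (Qs *ᵥ x t))
          + 2 * γ ^ 2 * (w t ⬝ᵥ (Ls *ᵥ x t))
          - γ ^ 2 * ((Ls *ᵥ x t) ⬝ᵥ (Ls *ᵥ x t)))))
        - ∫ t in Set.Ioi (0:ℝ), γ ^ 2 * ((w t - Ls *ᵥ x t) ⬝ᵥ (w t - Ls *ᵥ x t)) := by
        exact integral_sub hg_int.neg (hF2int.const_mul _)
    _ = -(γ ^ 2) * ∫ t in Set.Ioi (0:ℝ),
          (w t - Ls *ᵥ x t) ⬝ᵥ (w t - Ls *ᵥ x t) := by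
        rw [integral_neg, hVzero, MeasureTheory.integral_const_mul]
        ring
end
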